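/- Let (X,μ) be a measure space, p ∈ (0,1], and let Φ : (0,∞) → (0,∞) be continuous, nondecreasing, of upper type 1 with constant C₁ and of strictly lower type p; set Φ(0) := 0. Let K ∈ [0,∞) and let g, h, m : X → [0,∞] be μ-measurable functions such that for all γ ∈ (0,1] and all λ ∈ (0,∞): μ({g > 2λ} ∩ {m ≤ γλ}) ≤ K γ² μ({h > λ}). Then there exists C, depending only on C₁, p and K, such that for every γ ∈ (0,1]: ∫_X Φ(g) dμ ≤ C ( γ^{-1} ∫_X Φ(m) dμ + γ² ∫_X Φ(h) dμ ), with all integrals understood in [0,∞]. -/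

import Mathlib

open MeasureTheory ENNReal

/-- Canonical extension of `Φ : [0,∞) → [0,∞)` to `[0,∞]`, sending `∞` to `∞`. -/
noncomputable def extPhi (Φ : ℝ → ℝ) : ℝ≥0∞ → ℝ≥0∞ :=
  fun s => if s = ⊤ then ⊤ else ENNReal.ofReal (Φ s.toReal)

noncomputable def stmt9Psi (Φ : ℝ → ℝ) (s : ℝ) : ℝ := ∫ t in (0:ℝ)..s, Φ t / t

lemma stmt9_scale (F : ℝ → ℝ≥0∞) {c : ℝ} (hc : 0 < c) :
    ∫⁻ t in Set.Ioi (0:ℝ), F (c * t) = ENNReal.ofReal c⁻¹ * ∫⁻ t in Set.Ioi (0:ℝ), F t := by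
  set e : ℝ ≃ₜ ℝ := Homeomorph.mulLeft₀ c hc.ne'
  have he : ⇑e.toMeasurableEquiv = (c * ·) := Homeomorph.coe_mulLeft₀ c hc.ne'
  have key := MeasureTheory.lintegral_map_equiv (μ := volume.restrict (Set.Ioi (0:ℝ))) F
      e.toMeasurableEquiv
  rw [he] at key
  have hpre : (fun t => c * t) ⁻¹' (Set.Ioi (0:ℝ)) = Set.Ioi 0 := by
    ext t; simp [Set.mem_Ioi, mul_pos_iff_of_pos_left, hc]
  have hmap : (volume.restrict (Set.Ioi (0:ℝ))).map (fun t => c * t)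
      = ENNReal.ofReal c⁻¹ • volume.restrict (Set.Ioi (0:ℝ)) := by
    have h1 : ((volume : Measure ℝ).map (fun t => c * t)).restrict (Set.Ioi 0)
        = ((volume.restrict ((fun t => c * t) ⁻¹' (Set.Ioi 0))).map (fun t => c * t)) :=
      Measure.restrict_map (measurable_const_mul c) measurableSet_Ioi
    rw [hpre] at h1
    rw [← h1, Real.map_volume_mul_left hc.ne', Measure.restrict_smul,
      abs_of_pos (inv_pos.2 hc)]
  calc ∫⁻ t in Set.Ioi (0:ℝ), F (c * t)
      = ∫⁻ s, F s ∂((volume.restrict (Set.Ioi (0:ℝ))).map (fun t => c * t)) := by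
        rw [← key]
    _ = ENNReal.ofReal c⁻¹ * ∫⁻ t in Set.Ioi (0:ℝ), F t := by
        rw [hmap, lintegral_smul_measure, smul_eq_mul]

section Stmt9Aux

variable {p C₁ : ℝ} {Φ : ℝ → ℝ}
variable (hp : 0 < p) (hp1 : p ≤ 1) (hC₁ : 1 ≤ C₁)
variable (hcont : ContinuousOn Φ (Set.Ioi 0)) (hmono : MonotoneOn Φ (Set.Ioi 0))
variable (hpos : ∀ t ∈ Set.Ioi (0:ℝ), 0 < Φ t)
variable (hup : ∀ s ∈ Set.Ioi (0:ℝ), ∀ t : ℝ, 1 ≤ t → Φ (s * t) ≤ C₁ * t * Φ s)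
variable (hlow : ∀ s ∈ Set.Ioi (0:ℝ), ∀ t ∈ Set.Ioo (0:ℝ) 1, Φ (s * t) ≤ t ^ p * Φ s)
variable {X : Type} [MeasurableSpace X]

include hlow in
lemma stmt9_phi_ratio_bound {s : ℝ} (hs : 0 < s) {t : ℝ} (ht : t ∈ Set.Ioc 0 s) :
    Φ t ≤ t ^ p / s ^ p * Φ s := by
  rcases eq_or_lt_of_le ht.2 with rfl | hlt
  · rw [div_self (by positivity : (t:ℝ) ^ p ≠ 0), one_mul]
  · have h := hlow s hs (t / s) ⟨div_pos ht.1 hs, (div_lt_one hs).2 hlt⟩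
    rw [mul_div_cancel₀ _ hs.ne'] at h
    rwa [Real.div_rpow ht.1.le hs.le] at h

include hlow in
lemma stmt9_phi_div_bound {s : ℝ} (hs : 0 < s) {t : ℝ} (ht : t ∈ Set.Ioc 0 s) :
    Φ t / t ≤ Φ s / s ^ p * t ^ (p - 1) := by
  have h1 : t ^ (p - 1) = t ^ p / t := by
    rw [Real.rpow_sub ht.1, Real.rpow_one]
  rw [h1]
  have h2 := stmt9_phi_ratio_bound hlow hs ht
  calc Φ t / t ≤ (t ^ p / s ^ p * Φ s) / t := by
        apply div_le_div_of_nonneg_right h2 ht.1.le |>.trans_eq rfl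
    _ = Φ s / s ^ p * (t ^ p / t) := by ring

include hlow hp hcont hpos in
lemma stmt9_psi_integrableOn {s : ℝ} (hs : 0 < s) :
    IntegrableOn (fun t => Φ t / t) (Set.Ioc 0 s) volume := by
  have hdom : IntegrableOn (fun t => Φ s / s ^ p * t ^ (p - 1)) (Set.Ioc 0 s) volume := by
    have : IntervalIntegrable (fun t : ℝ => t ^ (p - 1)) volume 0 s :=
      intervalIntegral.intervalIntegrable_rpow' (by linarith)
    rw [intervalIntegrable_iff_integrableOn_Ioc_of_le hs.le] at this
    exact this.const_mul _
  have hmeas : AEStronglyMeasurable (fun t => Φ t / t) (volume.restrict (Set.Ioc 0 s)) := by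
    apply ContinuousOn.aestronglyMeasurable _ measurableSet_Ioc
    exact (hcont.mono (fun x hx => hx.1)).div (continuousOn_id) (fun x hx => hx.1.ne')
  apply Integrable.mono' hdom hmeas
  rw [ae_restrict_iff' measurableSet_Ioc]
  filter_upwards with t ht
  rw [Real.norm_eq_abs, abs_of_nonneg (div_nonneg (hpos t ht.1).le ht.1.le)]
  exact stmt9_phi_div_bound hlow hs ht

include hlow hp hcont hpos in
lemma stmt9_psi_intervalIntegrable {s : ℝ} (hs : 0 < s) :
    IntervalIntegrable (fun t => Φ t / t) volume 0 s := by
  rw [intervalIntegrable_iff_integrableOn_Ioc_of_le hs.le]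
  exact stmt9_psi_integrableOn hp hcont hpos hlow hs

include hpos in
lemma stmt9_psi_nonneg {s : ℝ} (hs : 0 ≤ s) : 0 ≤ stmt9Psi Φ s := by
  apply intervalIntegral.integral_nonneg hs
  intro t ht
  rcases eq_or_lt_of_le ht.1 with rfl | htpos
  · simp
  · exact div_nonneg (hpos t htpos).le htpos.le

include hlow hp hcont hpos in
lemma stmt9_psi_le {s : ℝ} (hs : 0 < s) : stmt9Psi Φ s ≤ Φ s / p := by
  have hint : ∫ t in (0:ℝ)..s, Φ s / s ^ p * t ^ (p - 1)
      = Φ s / s ^ p * (s ^ p / p) := by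
    rw [intervalIntegral.integral_const_mul, integral_rpow (Or.inl (by linarith))]
    rw [sub_add_cancel, Real.zero_rpow hp.ne', sub_zero]
  have hmon : stmt9Psi Φ s ≤ ∫ t in (0:ℝ)..s, Φ s / s ^ p * t ^ (p - 1) := by
    apply intervalIntegral.integral_mono_on hs.le
      (stmt9_psi_intervalIntegrable hp hcont hpos hlow hs)
      ((intervalIntegral.intervalIntegrable_rpow' (by linarith)).const_mul _)
    intro t ht
    rcases eq_or_lt_of_le ht.1 with rfl | htpos
    · simp only [_root_.div_zero]
      exact mul_nonneg (div_nonneg (hpos s hs).le (Real.rpow_nonneg hs.le p))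
        (Real.rpow_nonneg le_rfl _)
    · exact stmt9_phi_div_bound hlow hs ⟨htpos, ht.2⟩
  have : Φ s / s ^ p * (s ^ p / p) = Φ s / p := by
    field_simp
  rw [hint, this] at hmon
  exact hmon

include hlow hup hp hC₁ hcont hpos hmono in
lemma stmt9_psi_ge {s : ℝ} (hs : 0 < s) : Φ s * Real.log 2 ≤ 2 * C₁ * stmt9Psi Φ s := by
  have hs2 : 0 < s / 2 := by linarith
  have hI1 : IntervalIntegrable (fun t => Φ t / t) volume 0 (s/2) :=
    stmt9_psi_intervalIntegrable hp hcont hpos hlow hs2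
  have hIs : IntervalIntegrable (fun t => Φ t / t) volume 0 s :=
    stmt9_psi_intervalIntegrable hp hcont hpos hlow hs
  have hI2 : IntervalIntegrable (fun t => Φ t / t) volume (s/2) s := by
    apply hIs.mono_set
    rw [Set.uIcc_of_le (by linarith : (s:ℝ)/2 ≤ s), Set.uIcc_of_le hs.le]
    exact Set.Icc_subset_Icc (by linarith) le_rfl
  have hsplit : stmt9Psi Φ s = (∫ t in (0:ℝ)..(s/2), Φ t / t) + ∫ t in (s/2)..s, Φ t / t :=
    (intervalIntegral.integral_add_adjacent_intervals hI1 hI2).symm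
  have hlower : Φ (s/2) * Real.log 2 ≤ ∫ t in (s/2)..s, Φ t / t := by
    have hIinv : IntervalIntegrable (fun t : ℝ => Φ (s/2) * t⁻¹) volume (s/2) s := by
      apply IntervalIntegrable.const_mul
      apply intervalIntegral.intervalIntegrable_inv
      · intro x hx
        rw [Set.uIcc_of_le (by linarith : (s:ℝ)/2 ≤ s)] at hx
        exact (lt_of_lt_of_le hs2 hx.1).ne'
      · exact continuousOn_id
    have hcompar : ∫ t in (s/2)..s, Φ (s/2) * t⁻¹ ≤ ∫ t in (s/2)..s, Φ t / t := by
      apply intervalIntegral.integral_mono_on (by linarith) hIinv hI2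
      intro t ht
      have ht0 : 0 < t := lt_of_lt_of_le hs2 ht.1
      rw [← div_eq_mul_inv]
      apply div_le_div_of_nonneg_right _ ht0.le
      exact hmono (Set.mem_Ioi.2 hs2) (Set.mem_Ioi.2 ht0) ht.1
    have hval : ∫ t in (s/2)..s, Φ (s/2) * t⁻¹ = Φ (s/2) * Real.log 2 := by
      rw [intervalIntegral.integral_const_mul, integral_inv_of_pos hs2 hs]
      congr 1
      rw [div_div_eq_mul_div, mul_comm, mul_div_assoc, div_self hs.ne', mul_one]
    linarith
  have hup2 : Φ s ≤ 2 * C₁ * Φ (s/2) := by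
    have := hup (s/2) (Set.mem_Ioi.2 hs2) 2 (by norm_num)
    rw [div_mul_cancel₀ _ (by norm_num : (2:ℝ) ≠ 0)] at this
    linarith
  have hfirst : 0 ≤ ∫ t in (0:ℝ)..(s/2), Φ t / t := stmt9_psi_nonneg hpos hs2.le
  have hlog : 0 ≤ Real.log 2 := Real.log_nonneg (by norm_num)
  have hC₁0 : (0:ℝ) < C₁ := by linarith
  have hphi2 : 0 ≤ Φ (s/2) := (hpos _ (Set.mem_Ioi.2 hs2)).le
  calc Φ s * Real.log 2 ≤ (2 * C₁ * Φ (s/2)) * Real.log 2 := by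
        apply mul_le_mul_of_nonneg_right hup2 hlog
    _ = 2 * C₁ * (Φ (s/2) * Real.log 2) := by ring
    _ ≤ 2 * C₁ * ∫ t in (s/2)..s, Φ t / t := by
        apply mul_le_mul_of_nonneg_left hlower (by linarith)
    _ ≤ 2 * C₁ * stmt9Psi Φ s := by
        apply mul_le_mul_of_nonneg_left _ (by linarith)
        rw [hsplit]
        linarith

include hlow hp hcont hpos in
lemma stmt9_layercake (μ : Measure X) (u : X → ℝ≥0∞) (hu : Measurable u) :
    ∫⁻ x, ENNReal.ofReal (stmt9Psi Φ ((u x).toReal)) ∂μ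
      = ∫⁻ t in Set.Ioi (0:ℝ), μ {x | t < (u x).toReal} * ENNReal.ofReal (Φ t / t) := by
  apply lintegral_comp_eq_lintegral_meas_lt_mul μ
    (Filter.Eventually.of_forall fun x => ENNReal.toReal_nonneg)
    (hu.ennreal_toReal).aemeasurable
    (fun t ht => stmt9_psi_intervalIntegrable hp hcont hpos hlow ht)
  rw [ae_restrict_iff' measurableSet_Ioi]
  filter_upwards with t ht
  exact div_nonneg (hpos t ht).le (le_of_lt ht)

include hlow hp hcont hpos in
lemma stmt9_J_bound (μ : Measure X) (u : X → ℝ≥0∞) (hu : Measurable u) :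
    ∫⁻ t in Set.Ioi (0:ℝ), μ {x | ENNReal.ofReal t < u x} * ENNReal.ofReal (Φ t / t)
      ≤ ENNReal.ofReal p⁻¹ * ∫⁻ x, extPhi Φ (u x) ∂μ := by
  by_cases htop : μ {x | u x = ⊤} = 0
  · have step1 : ∫⁻ t in Set.Ioi (0:ℝ), μ {x | ENNReal.ofReal t < u x} * ENNReal.ofReal (Φ t / t)
        ≤ ∫⁻ t in Set.Ioi (0:ℝ), μ {x | t < (u x).toReal} * ENNReal.ofReal (Φ t / t) := by
      apply lintegral_mono_ae
      rw [ae_restrict_iff' measurableSet_Ioi]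
      filter_upwards with t ht
      apply mul_le_mul_left
      calc μ {x | ENNReal.ofReal t < u x}
          ≤ μ ({x | t < (u x).toReal} ∪ {x | u x = ⊤}) := by
            apply measure_mono
            intro x hx
            by_cases hxe : u x = ⊤
            · exact Or.inr hxe
            · exact Or.inl ((ENNReal.ofReal_lt_iff_lt_toReal (le_of_lt ht) hxe).1 hx)
        _ ≤ μ {x | t < (u x).toReal} + μ {x | u x = ⊤} := measure_union_le _ _
        _ = μ {x | t < (u x).toReal} := by rw [htop, add_zero]
    rw [← stmt9_layercake hp hcont hpos hlow μ u hu] at step1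
    refine step1.trans ?_
    rw [← lintegral_const_mul' _ _ ENNReal.ofReal_ne_top]
    apply lintegral_mono
    intro x
    by_cases hxe : u x = ⊤
    · simp [hxe, stmt9Psi, intervalIntegral.integral_same]
    · rcases eq_or_lt_of_le (ENNReal.toReal_nonneg (a := u x)) with h0 | hpos'
      · simp only []
        rw [← h0]
        simp [stmt9Psi, intervalIntegral.integral_same]
      · have : stmt9Psi Φ ((u x).toReal) ≤ p⁻¹ * Φ ((u x).toReal) := by
          rw [inv_mul_eq_div]
          exact (stmt9_psi_le hp hcont hpos hlow hpos').trans
            (by rw [div_le_div_iff₀ hp hp])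
        calc ENNReal.ofReal (stmt9Psi Φ ((u x).toReal))
            ≤ ENNReal.ofReal (p⁻¹ * Φ ((u x).toReal)) := ENNReal.ofReal_le_ofReal this
          _ = ENNReal.ofReal p⁻¹ * ENNReal.ofReal (Φ ((u x).toReal)) :=
              ENNReal.ofReal_mul (by positivity)
          _ = ENNReal.ofReal p⁻¹ * extPhi Φ (u x) := by rw [extPhi, if_neg hxe]
  · have hS : MeasurableSet {x | u x = ⊤} := hu (measurableSet_singleton ⊤)
    have h1 : ∫⁻ x in {x | u x = ⊤}, extPhi Φ (u x) ∂μ = ⊤ := by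
      have : ∫⁻ x in {x | u x = ⊤}, extPhi Φ (u x) ∂μ
          = ∫⁻ _x in {x | u x = ⊤}, (⊤:ℝ≥0∞) ∂μ := by
        apply setLIntegral_congr_fun hS
        intro x (hx : u x = ⊤)
        dsimp only
        rw [extPhi, if_pos hx]
      rw [this, setLIntegral_const]
      exact ENNReal.top_mul htop
    have h2 : ∫⁻ x, extPhi Φ (u x) ∂μ = ⊤ :=
      top_le_iff.1 (h1 ▸ setLIntegral_le_lintegral _ _)
    rw [h2, ENNReal.mul_top (by simpa using inv_pos.2 hp)]
    exact le_top

include hp hmono hpos hlow in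
lemma stmt9_int_extPhi_eq_top (μ : Measure X) (h : X → ℝ≥0∞) (hh : Measurable h)
    {c ε : ℝ≥0∞} (hc : c ≠ ⊤) (hε : ε ≠ 0) (N : ℕ)
    (hb : ∀ n : ℕ, N ≤ n → ε ≤ c * μ {x | ENNReal.ofReal ((n:ℝ)+1) < h x}) :
    ∫⁻ x, extPhi Φ (h x) ∂μ = ⊤ := by
  by_contra hI
  set I := ∫⁻ x, extPhi Φ (h x) ∂μ with hIdef
  have stepa : ∀ n : ℕ, ENNReal.ofReal (Φ ((n:ℝ)+1)) * μ {x | ENNReal.ofReal ((n:ℝ)+1) < h x} ≤ I := by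
    intro n
    have hn1 : (0:ℝ) < (n:ℝ)+1 := by positivity
    have hS : MeasurableSet {x | ENNReal.ofReal ((n:ℝ)+1) < h x} :=
      hh measurableSet_Ioi
    calc ENNReal.ofReal (Φ ((n:ℝ)+1)) * μ {x | ENNReal.ofReal ((n:ℝ)+1) < h x}
        = ∫⁻ _x in {x | ENNReal.ofReal ((n:ℝ)+1) < h x}, ENNReal.ofReal (Φ ((n:ℝ)+1)) ∂μ := by
          rw [setLIntegral_const]
      _ ≤ ∫⁻ x in {x | ENNReal.ofReal ((n:ℝ)+1) < h x}, extPhi Φ (h x) ∂μ := by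
          apply setLIntegral_mono' hS
          intro x hx
          by_cases hxe : h x = ⊤
          · rw [extPhi, if_pos hxe]; exact le_top
          · rw [extPhi, if_neg hxe]
            apply ENNReal.ofReal_le_ofReal
            have hlt : (n:ℝ)+1 < (h x).toReal :=
              (ENNReal.ofReal_lt_iff_lt_toReal hn1.le hxe).1 hx
            exact hmono (Set.mem_Ioi.2 hn1) (Set.mem_Ioi.2 (hn1.trans hlt)) hlt.le
      _ ≤ I := setLIntegral_le_lintegral _ _
  have stepb : ∀ n : ℕ, N ≤ n → ENNReal.ofReal (Φ ((n:ℝ)+1)) * ε ≤ c * I := by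
    intro n hn
    calc ENNReal.ofReal (Φ ((n:ℝ)+1)) * ε
        ≤ ENNReal.ofReal (Φ ((n:ℝ)+1)) * (c * μ {x | ENNReal.ofReal ((n:ℝ)+1) < h x}) :=
          mul_le_mul_right (hb n hn) _
      _ = c * (ENNReal.ofReal (Φ ((n:ℝ)+1)) * μ {x | ENNReal.ofReal ((n:ℝ)+1) < h x}) := by
          ring
      _ ≤ c * I := mul_le_mul_right (stepa n) _
  have hcI : c * I ≠ ⊤ := ENNReal.mul_ne_top hc hI
  have hεtop : ε ≠ ⊤ := by
    intro hεt
    have hN := stepb N le_rfl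
    rw [hεt, ENNReal.mul_top] at hN
    · exact hcI (top_le_iff.1 hN)
    · simpa using hpos ((N:ℝ)+1) (Set.mem_Ioi.2 (by positivity))
  set R : ℝ := ((c * I) / ε).toReal with hR
  have hdivtop : (c * I) / ε ≠ ⊤ := (ENNReal.div_lt_top hcI hε).ne
  have stepc : ∀ n : ℕ, N ≤ n → Φ ((n:ℝ)+1) ≤ R := by
    intro n hn
    have h1 : ENNReal.ofReal (Φ ((n:ℝ)+1)) ≤ (c * I) / ε :=
      (ENNReal.le_div_iff_mul_le (Or.inl hε) (Or.inl hεtop)).2 (stepb n hn)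
    exact (ENNReal.ofReal_le_iff_le_toReal hdivtop).1 h1
  have hΦ1 : 0 < Φ 1 := hpos 1 (by norm_num)
  have stepd : ∀ n : ℕ, 1 ≤ n → ((n:ℝ)+1) ^ p * Φ 1 ≤ Φ ((n:ℝ)+1) := by
    intro n hn
    have hn1 : (1:ℝ) < (n:ℝ)+1 := by
      have : (1:ℝ) ≤ (n:ℝ) := by exact_mod_cast hn
      linarith
    have h0 : (0:ℝ) < (n:ℝ)+1 := by linarith
    have := hlow ((n:ℝ)+1) (Set.mem_Ioi.2 h0) (((n:ℝ)+1)⁻¹)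
      ⟨inv_pos.2 h0, inv_lt_one_of_one_lt₀ hn1⟩
    rw [mul_inv_cancel₀ h0.ne'] at this
    rw [Real.inv_rpow h0.le] at this
    rw [inv_mul_eq_div, le_div_iff₀ (by positivity)] at this
    linarith [this]
  set R' : ℝ := max (R / Φ 1) 1 with hR'
  set n : ℕ := max (max N 1) ⌈R' ^ p⁻¹⌉₊ with hn
  have hnN : N ≤ n := le_trans (le_max_left _ _) (le_max_left _ _)
  have hn1 : 1 ≤ n := le_trans (le_max_right _ _) (le_max_left _ _)
  have hceil : (R' ^ p⁻¹ : ℝ) ≤ (n:ℝ) := by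
    calc (R' ^ p⁻¹ : ℝ) ≤ (⌈R' ^ p⁻¹⌉₊ : ℝ) := Nat.le_ceil _
      _ ≤ (n:ℝ) := by exact_mod_cast Nat.le_of_eq rfl |>.trans (le_max_right (max N 1) _)
  have hR'0 : (0:ℝ) ≤ R' := le_trans zero_le_one (le_max_right _ _)
  have hkey : R' < ((n:ℝ)+1) ^ p := by
    have h1 : R' = (R' ^ p⁻¹) ^ p := by
      rw [← Real.rpow_mul hR'0, inv_mul_cancel₀ hp.ne', Real.rpow_one]
    rw [h1]
    apply Real.rpow_lt_rpow (Real.rpow_nonneg hR'0 _) _ hp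
    linarith
  have hcontr : R < ((n:ℝ)+1) ^ p * Φ 1 := by
    have hle : R / Φ 1 ≤ R' := le_max_left _ _
    have h2 : R / Φ 1 < ((n:ℝ)+1) ^ p := lt_of_le_of_lt hle hkey
    rwa [div_lt_iff₀ hΦ1] at h2
  have := lt_of_lt_of_le hcontr ((stepd n hn1).trans (stepc n hnN))
  exact lt_irrefl R this

end Stmt9Aux
/-- the "good-λ" integral inequality. If
`μ({g > 2λ} ∩ {m ≤ γλ}) ≤ K γ² μ({h > λ})` for all `γ ∈ (0,1]` and `λ > 0`, then
`∫ Φ(g) dμ ≤ C (γ⁻¹ ∫ Φ(m) dμ + γ² ∫ Φ(h) dμ)` with `C` depending only on `C₁`, `p`, `K`. -/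
theorem stmt9 (p C₁ K : ℝ) (hp : p ∈ Set.Ioc (0:ℝ) 1) (hC₁ : 1 ≤ C₁) (hK : 0 ≤ K) :
    ∃ C : ℝ, 0 < C ∧
    ∀ (X : Type) [MeasurableSpace X], ∀ (μ : Measure X),
    ∀ Φ : ℝ → ℝ, ContinuousOn Φ (Set.Ioi 0) → MonotoneOn Φ (Set.Ioi 0) →
      (∀ t ∈ Set.Ioi (0:ℝ), 0 < Φ t) → Φ 0 = 0 →
      (∀ s ∈ Set.Ioi (0:ℝ), ∀ t : ℝ, 1 ≤ t → Φ (s * t) ≤ C₁ * t * Φ s) →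
      (∀ s ∈ Set.Ioi (0:ℝ), ∀ t ∈ Set.Ioo (0:ℝ) 1, Φ (s * t) ≤ t ^ p * Φ s) →
    ∀ g h m : X → ℝ≥0∞, Measurable g → Measurable h → Measurable m →
      (∀ γ ∈ Set.Ioc (0:ℝ) 1, ∀ l : ℝ, 0 < l →
        μ ({x | ENNReal.ofReal (2 * l) < g x} ∩ {x | m x ≤ ENNReal.ofReal (γ * l)}) ≤
          ENNReal.ofReal (K * γ ^ 2) * μ {x | ENNReal.ofReal l < h x}) →
      ∀ γ ∈ Set.Ioc (0:ℝ) 1,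
        (∫⁻ x, extPhi Φ (g x) ∂μ) ≤
          ENNReal.ofReal C * (ENNReal.ofReal γ⁻¹ * ∫⁻ x, extPhi Φ (m x) ∂μ +
            ENNReal.ofReal (γ ^ 2) * ∫⁻ x, extPhi Φ (h x) ∂μ) := by
  obtain ⟨hp0, hp1⟩ := hp
  have hlog : (0:ℝ) < Real.log 2 := Real.log_pos one_lt_two
  have hC₁0 : (0:ℝ) < C₁ := lt_of_lt_of_le one_pos hC₁
  have hK1 : (0:ℝ) < K + 1 := by linarith
  set D : ℝ := 4*C₁^2*(K+1)/(p*Real.log 2) with hD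
  have hD0 : 0 < D := by positivity
  refine ⟨D + 1, by linarith, ?_⟩
  intro X _ μ Φ hcont hmono hpos h0 hup hlow g h m hg hh hm hyp γ hγ
  have hγ0 : 0 < γ := hγ.1
  have hγ1 : γ ≤ 1 := hγ.2
  by_cases hgtop : μ {x | g x = ⊤} = 0
  · -- main case
    have hstep0 : ∫⁻ x, extPhi Φ (g x) ∂μ = ∫⁻ x, ENNReal.ofReal (Φ ((g x).toReal)) ∂μ := by
      apply lintegral_congr_ae
      have hae : ∀ᵐ x ∂μ, g x ≠ ⊤ := by
        rw [ae_iff]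
        simpa using hgtop
      filter_upwards [hae] with x hx
      rw [extPhi, if_neg hx]
    set c₂ : ℝ := 2*C₁/Real.log 2 with hc₂
    have hc₂0 : 0 < c₂ := by positivity
    have hstep1 : ∫⁻ x, ENNReal.ofReal (Φ ((g x).toReal)) ∂μ
        ≤ ENNReal.ofReal c₂ * ∫⁻ x, ENNReal.ofReal (stmt9Psi Φ ((g x).toReal)) ∂μ := by
      rw [← lintegral_const_mul' _ _ ENNReal.ofReal_ne_top]
      apply lintegral_mono
      intro x
      rcases eq_or_lt_of_le (ENNReal.toReal_nonneg : 0 ≤ (g x).toReal) with h0' | hfx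
      · simp only [← h0', h0, ENNReal.ofReal_zero]
        exact zero_le
      · have hge := stmt9_psi_ge hp0 hC₁ hcont hmono hpos hup hlow hfx
        have hreal : Φ ((g x).toReal) ≤ c₂ * stmt9Psi Φ ((g x).toReal) := by
          rw [hc₂, show 2*C₁/Real.log 2 * stmt9Psi Φ ((g x).toReal)
              = (2*C₁*stmt9Psi Φ ((g x).toReal))/Real.log 2 from by ring, le_div_iff₀ hlog]
          linarith
        calc ENNReal.ofReal (Φ ((g x).toReal))
            ≤ ENNReal.ofReal (c₂ * stmt9Psi Φ ((g x).toReal)) := ENNReal.ofReal_le_ofReal hreal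
          _ = ENNReal.ofReal c₂ * ENNReal.ofReal (stmt9Psi Φ ((g x).toReal)) :=
              ENNReal.ofReal_mul hc₂0.le
    have hstep2 := stmt9_layercake hp0 hcont hpos hlow μ g hg
    -- pointwise good-lambda splitting
    have hkey : ∀ᵐ t ∂(volume.restrict (Set.Ioi (0:ℝ))),
        μ {x | t < (g x).toReal} * ENNReal.ofReal (Φ t / t)
        ≤ ENNReal.ofReal (K*γ^2) *
            (μ {x | ENNReal.ofReal ((1/2)*t) < h x} * ENNReal.ofReal (Φ t / t))
          + μ {x | ENNReal.ofReal ((γ/2)*t) < m x} * ENNReal.ofReal (Φ t / t) := by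
      rw [ae_restrict_iff' measurableSet_Ioi]
      filter_upwards with t ht
      have ht0 : (0:ℝ) < t := ht
      have hhyp := hyp γ hγ (t/2) (by linarith)
      rw [show γ*(t/2) = (γ/2)*t from by ring, show 2*(t/2) = t from by ring,
        show t/2 = (1/2)*t from by ring] at hhyp
      have hsub : μ {x | t < (g x).toReal}
          ≤ ENNReal.ofReal (K*γ^2) * μ {x | ENNReal.ofReal ((1/2)*t) < h x}
            + μ {x | ENNReal.ofReal ((γ/2)*t) < m x} := by
        calc μ {x | t < (g x).toReal}
            ≤ μ (({x | ENNReal.ofReal t < g x} ∩ {x | m x ≤ ENNReal.ofReal ((γ/2)*t)})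
                ∪ {x | ENNReal.ofReal ((γ/2)*t) < m x}) := by
              apply measure_mono
              intro x hx
              have hgx : ENNReal.ofReal t < g x := by
                by_cases hxe : g x = ⊤
                · rw [hxe]; exact ENNReal.ofReal_lt_top
                · exact (ENNReal.ofReal_lt_iff_lt_toReal ht0.le hxe).2 hx
              by_cases hmx : m x ≤ ENNReal.ofReal ((γ/2)*t)
              · exact Or.inl ⟨hgx, hmx⟩
              · exact Or.inr (not_le.1 hmx)
          _ ≤ μ ({x | ENNReal.ofReal t < g x} ∩ {x | m x ≤ ENNReal.ofReal ((γ/2)*t)})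
                + μ {x | ENNReal.ofReal ((γ/2)*t) < m x} := measure_union_le _ _
          _ ≤ _ := by
              gcongr
      calc μ {x | t < (g x).toReal} * ENNReal.ofReal (Φ t / t)
          ≤ (ENNReal.ofReal (K*γ^2) * μ {x | ENNReal.ofReal ((1/2)*t) < h x}
              + μ {x | ENNReal.ofReal ((γ/2)*t) < m x}) * ENNReal.ofReal (Φ t / t) :=
            mul_le_mul_left hsub _
        _ = _ := by rw [add_mul, mul_assoc]
    -- measurability for splitting the integral
    have meas_h : Measurable fun t : ℝ => μ {x | ENNReal.ofReal ((1/2)*t) < h x} := by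
      apply Antitone.measurable
      intro a b hab
      exact measure_mono (fun x hx =>
        lt_of_le_of_lt (ENNReal.ofReal_le_ofReal (by linarith)) hx)
    have meas_phi : AEMeasurable (fun t : ℝ => ENNReal.ofReal (Φ t / t))
        (volume.restrict (Set.Ioi 0)) := by
      apply ENNReal.measurable_ofReal.comp_aemeasurable
      exact (hcont.div continuousOn_id (fun x hx => ne_of_gt hx)).aemeasurable measurableSet_Ioi
    have hA : AEMeasurable (fun t : ℝ => ENNReal.ofReal (K*γ^2) *
        (μ {x | ENNReal.ofReal ((1/2)*t) < h x} * ENNReal.ofReal (Φ t / t)))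
        (volume.restrict (Set.Ioi 0)) :=
      (meas_h.aemeasurable.mul meas_phi).const_mul _
    have hstep3 : ∫⁻ t in Set.Ioi (0:ℝ), μ {x | t < (g x).toReal} * ENNReal.ofReal (Φ t / t)
        ≤ (∫⁻ t in Set.Ioi (0:ℝ), ENNReal.ofReal (K*γ^2) *
              (μ {x | ENNReal.ofReal ((1/2)*t) < h x} * ENNReal.ofReal (Φ t / t)))
          + ∫⁻ t in Set.Ioi (0:ℝ),
              μ {x | ENNReal.ofReal ((γ/2)*t) < m x} * ENNReal.ofReal (Φ t / t) := by
      refine le_trans (lintegral_mono_ae hkey) ?_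
      exact (lintegral_add_left' hA _).le
    -- the h term
    have hhterm : (∫⁻ t in Set.Ioi (0:ℝ), ENNReal.ofReal (K*γ^2) *
          (μ {x | ENNReal.ofReal ((1/2)*t) < h x} * ENNReal.ofReal (Φ t / t)))
        ≤ ENNReal.ofReal (K*γ^2) * (ENNReal.ofReal C₁ * (ENNReal.ofReal (((1:ℝ)/2))⁻¹ *
            (ENNReal.ofReal p⁻¹ * ∫⁻ x, extPhi Φ (h x) ∂μ))) := by
      rw [lintegral_const_mul' _ _ ENNReal.ofReal_ne_top]
      apply mul_le_mul_right
      have hpt : ∀ᵐ t ∂(volume.restrict (Set.Ioi (0:ℝ))),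
          μ {x | ENNReal.ofReal ((1/2)*t) < h x} * ENNReal.ofReal (Φ t / t)
          ≤ ENNReal.ofReal C₁ * ((fun s => μ {x | ENNReal.ofReal s < h x} *
              ENNReal.ofReal (Φ s / s)) ((1/2)*t)) := by
        rw [ae_restrict_iff' measurableSet_Ioi]
        filter_upwards with t ht
        have ht0 : (0:ℝ) < t := ht
        have hs0 : (0:ℝ) < (1/2)*t := by linarith
        have hreal : Φ t / t ≤ C₁ * (Φ ((1/2)*t) / ((1/2)*t)) := by
          have h1 := hup ((1/2)*t) (Set.mem_Ioi.2 hs0) 2 (by norm_num)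
          rw [show (1/2)*t*2 = t from by ring] at h1
          rw [div_le_iff₀ ht0]
          have heq : C₁ * (Φ ((1/2)*t) / ((1/2)*t)) * t = C₁ * 2 * Φ ((1/2)*t) := by
            field_simp
          rw [heq]; linarith
        calc μ {x | ENNReal.ofReal ((1/2)*t) < h x} * ENNReal.ofReal (Φ t / t)
            ≤ μ {x | ENNReal.ofReal ((1/2)*t) < h x} *
                ENNReal.ofReal (C₁ * (Φ ((1/2)*t) / ((1/2)*t))) :=
              mul_le_mul_right (ENNReal.ofReal_le_ofReal hreal) _
          _ = ENNReal.ofReal C₁ * (μ {x | ENNReal.ofReal ((1/2)*t) < h x} *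
                ENNReal.ofReal (Φ ((1/2)*t) / ((1/2)*t))) := by
              rw [ENNReal.ofReal_mul hC₁0.le]; ring
      refine le_trans (lintegral_mono_ae hpt) ?_
      rw [lintegral_const_mul' _ _ ENNReal.ofReal_ne_top]
      apply mul_le_mul_right
      calc ∫⁻ t in Set.Ioi (0:ℝ), (fun s => μ {x | ENNReal.ofReal s < h x} *
              ENNReal.ofReal (Φ s / s)) ((1/2)*t)
          = ENNReal.ofReal (((1:ℝ)/2))⁻¹ * ∫⁻ s in Set.Ioi (0:ℝ),
              μ {x | ENNReal.ofReal s < h x} * ENNReal.ofReal (Φ s / s) :=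
            stmt9_scale (fun s => μ {x | ENNReal.ofReal s < h x} * ENNReal.ofReal (Φ s / s))
              (c := (1:ℝ)/2) (by norm_num)
        _ ≤ ENNReal.ofReal (((1:ℝ)/2))⁻¹ * (ENNReal.ofReal p⁻¹ * ∫⁻ x, extPhi Φ (h x) ∂μ) :=
            mul_le_mul_right (stmt9_J_bound hp0 hcont hpos hlow μ h hh) _
    -- the m term
    have hmterm : (∫⁻ t in Set.Ioi (0:ℝ),
          μ {x | ENNReal.ofReal ((γ/2)*t) < m x} * ENNReal.ofReal (Φ t / t))
        ≤ ENNReal.ofReal C₁ * (ENNReal.ofReal ((γ/2))⁻¹ *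
            (ENNReal.ofReal p⁻¹ * ∫⁻ x, extPhi Φ (m x) ∂μ)) := by
      have hpt : ∀ᵐ t ∂(volume.restrict (Set.Ioi (0:ℝ))),
          μ {x | ENNReal.ofReal ((γ/2)*t) < m x} * ENNReal.ofReal (Φ t / t)
          ≤ ENNReal.ofReal C₁ * ((fun s => μ {x | ENNReal.ofReal s < m x} *
              ENNReal.ofReal (Φ s / s)) ((γ/2)*t)) := by
        rw [ae_restrict_iff' measurableSet_Ioi]
        filter_upwards with t ht
        have ht0 : (0:ℝ) < t := ht
        have hs0 : (0:ℝ) < (γ/2)*t := by positivity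
        have hreal : Φ t / t ≤ C₁ * (Φ ((γ/2)*t) / ((γ/2)*t)) := by
          have h2γ : (1:ℝ) ≤ 2/γ := by
            rw [le_div_iff₀ hγ0]; linarith
          have h1 := hup ((γ/2)*t) (Set.mem_Ioi.2 hs0) (2/γ) h2γ
          rw [show (γ/2)*t*(2/γ) = t from by field_simp] at h1
          rw [div_le_iff₀ ht0]
          have heq : C₁ * (Φ ((γ/2)*t) / ((γ/2)*t)) * t = C₁ * (2/γ) * Φ ((γ/2)*t) := by
            field_simp
          rw [heq]; linarith
        calc μ {x | ENNReal.ofReal ((γ/2)*t) < m x} * ENNReal.ofReal (Φ t / t)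
            ≤ μ {x | ENNReal.ofReal ((γ/2)*t) < m x} *
                ENNReal.ofReal (C₁ * (Φ ((γ/2)*t) / ((γ/2)*t))) :=
              mul_le_mul_right (ENNReal.ofReal_le_ofReal hreal) _
          _ = ENNReal.ofReal C₁ * (μ {x | ENNReal.ofReal ((γ/2)*t) < m x} *
                ENNReal.ofReal (Φ ((γ/2)*t) / ((γ/2)*t))) := by
              rw [ENNReal.ofReal_mul hC₁0.le]; ring
      refine le_trans (lintegral_mono_ae hpt) ?_
      rw [lintegral_const_mul' _ _ ENNReal.ofReal_ne_top]
      apply mul_le_mul_right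
      calc ∫⁻ t in Set.Ioi (0:ℝ), (fun s => μ {x | ENNReal.ofReal s < m x} *
              ENNReal.ofReal (Φ s / s)) ((γ/2)*t)
          = ENNReal.ofReal ((γ/2))⁻¹ * ∫⁻ s in Set.Ioi (0:ℝ),
              μ {x | ENNReal.ofReal s < m x} * ENNReal.ofReal (Φ s / s) :=
            stmt9_scale (fun s => μ {x | ENNReal.ofReal s < m x} * ENNReal.ofReal (Φ s / s))
              (c := γ/2) (by positivity)
        _ ≤ ENNReal.ofReal ((γ/2))⁻¹ * (ENNReal.ofReal p⁻¹ * ∫⁻ x, extPhi Φ (m x) ∂μ) :=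
            mul_le_mul_right (stmt9_J_bound hp0 hcont hpos hlow μ m hm) _
    -- put everything together
    have htotal : ∫⁻ x, extPhi Φ (g x) ∂μ
        ≤ ENNReal.ofReal c₂ * (ENNReal.ofReal (K*γ^2) * (ENNReal.ofReal C₁ *
            (ENNReal.ofReal (((1:ℝ)/2))⁻¹ * (ENNReal.ofReal p⁻¹ * ∫⁻ x, extPhi Φ (h x) ∂μ)))
          + ENNReal.ofReal C₁ * (ENNReal.ofReal ((γ/2))⁻¹ *
            (ENNReal.ofReal p⁻¹ * ∫⁻ x, extPhi Φ (m x) ∂μ))) := by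
      rw [hstep0]
      refine hstep1.trans ?_
      apply mul_le_mul_right
      rw [hstep2]
      exact hstep3.trans (add_le_add hhterm hmterm)
    refine htotal.trans ?_
    -- final constant comparison
    have e1 : ENNReal.ofReal c₂ * (ENNReal.ofReal (K*γ^2) * (ENNReal.ofReal C₁ *
            (ENNReal.ofReal (((1:ℝ)/2))⁻¹ * (ENNReal.ofReal p⁻¹ * ∫⁻ x, extPhi Φ (h x) ∂μ)))
          + ENNReal.ofReal C₁ * (ENNReal.ofReal ((γ/2))⁻¹ *
            (ENNReal.ofReal p⁻¹ * ∫⁻ x, extPhi Φ (m x) ∂μ)))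
        = ENNReal.ofReal (c₂ * (K*γ^2) * C₁ * ((1:ℝ)/2)⁻¹ * p⁻¹) * (∫⁻ x, extPhi Φ (h x) ∂μ)
          + ENNReal.ofReal (c₂ * C₁ * (γ/2)⁻¹ * p⁻¹) * (∫⁻ x, extPhi Φ (m x) ∂μ) := by
      have hKγ : 0 ≤ K*γ^2 := mul_nonneg hK (sq_nonneg γ)
      have c1 : ENNReal.ofReal (c₂ * (K*γ^2) * C₁ * ((1:ℝ)/2)⁻¹ * p⁻¹)
          = ENNReal.ofReal c₂ * ENNReal.ofReal (K*γ^2) * ENNReal.ofReal C₁ *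
            ENNReal.ofReal (((1:ℝ)/2))⁻¹ * ENNReal.ofReal p⁻¹ := by
        rw [ENNReal.ofReal_mul (mul_nonneg (mul_nonneg (mul_nonneg hc₂0.le hKγ) hC₁0.le) (by norm_num)),
          ENNReal.ofReal_mul (mul_nonneg (mul_nonneg hc₂0.le hKγ) hC₁0.le),
          ENNReal.ofReal_mul (mul_nonneg hc₂0.le hKγ),
          ENNReal.ofReal_mul hc₂0.le]
      have c2 : ENNReal.ofReal (c₂ * C₁ * (γ/2)⁻¹ * p⁻¹)
          = ENNReal.ofReal c₂ * ENNReal.ofReal C₁ * ENNReal.ofReal ((γ/2))⁻¹ *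
            ENNReal.ofReal p⁻¹ := by
        rw [ENNReal.ofReal_mul (by positivity), ENNReal.ofReal_mul (by positivity),
          ENNReal.ofReal_mul hc₂0.le]
      rw [mul_add]
      congr 1
      · rw [c1]; ring
      · rw [c2]; ring
    rw [e1]
    have hrealh : c₂ * (K*γ^2) * C₁ * ((1:ℝ)/2)⁻¹ * p⁻¹ ≤ (D+1) * γ^2 := by
      have heq : c₂ * (K*γ^2) * C₁ * ((1:ℝ)/2)⁻¹ * p⁻¹
          = γ^2 * (4*C₁^2*K/(p*Real.log 2)) := by
        rw [hc₂]
        field_simp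
        ring
      rw [heq]
      have hle : 4*C₁^2*K/(p*Real.log 2) ≤ D + 1 := by
        have h1 : 4*C₁^2*K ≤ 4*C₁^2*(K+1) := by nlinarith [sq_nonneg C₁]
        have h2 : 4*C₁^2*K/(p*Real.log 2) ≤ 4*C₁^2*(K+1)/(p*Real.log 2) :=
          div_le_div_of_nonneg_right h1 (by positivity)
        rw [← hD] at h2
        linarith
      calc γ^2 * (4*C₁^2*K/(p*Real.log 2)) ≤ γ^2 * (D+1) :=
            mul_le_mul_of_nonneg_left hle (sq_nonneg γ)
        _ = (D+1) * γ^2 := by ring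
    have hrealm : c₂ * C₁ * (γ/2)⁻¹ * p⁻¹ ≤ (D+1) * γ⁻¹ := by
      have heq : c₂ * C₁ * (γ/2)⁻¹ * p⁻¹ = γ⁻¹ * (4*C₁^2/(p*Real.log 2)) := by
        rw [hc₂]
        field_simp
        ring
      rw [heq]
      have hle : 4*C₁^2/(p*Real.log 2) ≤ D + 1 := by
        have h1 : 4*C₁^2 ≤ 4*C₁^2*(K+1) := by nlinarith [sq_nonneg C₁]
        have h2 : 4*C₁^2/(p*Real.log 2) ≤ 4*C₁^2*(K+1)/(p*Real.log 2) :=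
          div_le_div_of_nonneg_right h1 (by positivity)
        rw [← hD] at h2
        linarith
      calc γ⁻¹ * (4*C₁^2/(p*Real.log 2)) ≤ γ⁻¹ * (D+1) :=
            mul_le_mul_of_nonneg_left hle (by positivity)
        _ = (D+1) * γ⁻¹ := by ring
    calc ENNReal.ofReal (c₂ * (K*γ^2) * C₁ * ((1:ℝ)/2)⁻¹ * p⁻¹) * (∫⁻ x, extPhi Φ (h x) ∂μ)
          + ENNReal.ofReal (c₂ * C₁ * (γ/2)⁻¹ * p⁻¹) * (∫⁻ x, extPhi Φ (m x) ∂μ)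
        ≤ ENNReal.ofReal ((D+1) * γ^2) * (∫⁻ x, extPhi Φ (h x) ∂μ)
          + ENNReal.ofReal ((D+1) * γ⁻¹) * (∫⁻ x, extPhi Φ (m x) ∂μ) := by
          exact add_le_add (mul_le_mul_left (ENNReal.ofReal_le_ofReal hrealh) _)
            (mul_le_mul_left (ENNReal.ofReal_le_ofReal hrealm) _)
      _ = ENNReal.ofReal (D+1) * (ENNReal.ofReal γ⁻¹ * ∫⁻ x, extPhi Φ (m x) ∂μ
            + ENNReal.ofReal (γ^2) * ∫⁻ x, extPhi Φ (h x) ∂μ) := by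
          rw [ENNReal.ofReal_mul (by linarith), ENNReal.ofReal_mul (by linarith)]
          rw [mul_add]
          ring
  · -- case μ {g = ⊤} > 0 : the right-hand side is infinite
    have hgS : MeasurableSet {x | g x = ⊤} := hg (measurableSet_singleton ⊤)
    have hsplitμ : μ {x | g x = ⊤} ≤ μ ({x | g x = ⊤} ∩ {x | m x = ⊤})
        + μ ({x | g x = ⊤} ∩ {x | m x ≠ ⊤}) := by
      refine le_trans (measure_mono ?_) (measure_union_le _ _)
      intro x hx
      by_cases hm' : m x = ⊤
      · exact Or.inl ⟨hx, hm'⟩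
      · exact Or.inr ⟨hx, hm'⟩
    have key : (∫⁻ x, extPhi Φ (m x) ∂μ) = ⊤ ∨ (∫⁻ x, extPhi Φ (h x) ∂μ) = ⊤ := by
      by_cases h1 : μ ({x | g x = ⊤} ∩ {x | m x = ⊤}) = 0
      · right
        have h2 : μ ({x | g x = ⊤} ∩ {x | m x ≠ ⊤}) ≠ 0 := by
          intro h2
          apply hgtop
          rw [h1, h2, add_zero] at hsplitμ
          exact le_antisymm hsplitμ zero_le
        set B : ℕ → Set X := fun n =>
          {x | g x = ⊤} ∩ {x | m x ≤ ENNReal.ofReal (γ*((n:ℝ)+1))} with hB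
        have hBmono : Monotone B := by
          intro a b hab
          apply Set.inter_subset_inter_right
          intro x hx
          refine le_trans hx (ENNReal.ofReal_le_ofReal ?_)
          have : (a:ℝ) ≤ b := by exact_mod_cast hab
          nlinarith
        have hBU : ⋃ n, B n = {x | g x = ⊤} ∩ {x | m x ≠ ⊤} := by
          apply Set.Subset.antisymm
          · intro x hx
            obtain ⟨n, hn⟩ := Set.mem_iUnion.1 hx
            exact ⟨hn.1, ne_top_of_le_ne_top ENNReal.ofReal_ne_top hn.2⟩
          · intro x hx
            obtain ⟨n, hn⟩ := exists_nat_ge ((m x).toReal / γ)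
            refine Set.mem_iUnion.2 ⟨n, hx.1, ?_⟩
            rw [Set.mem_setOf_eq, ENNReal.le_ofReal_iff_toReal_le hx.2 (by positivity)]
            rw [div_le_iff₀ hγ0] at hn
            nlinarith
        have hμB : μ (⋃ n, B n) = ⨆ n, μ (B n) :=
          Directed.measure_iUnion (μ := μ) (hBmono.directed_le)
        have hex : ∃ N, μ (B N) ≠ 0 := by
          by_contra hcon
          push_neg at hcon
          apply h2
          rw [← hBU, hμB]
          simp [hcon]
        obtain ⟨N, hN⟩ := hex
        apply stmt9_int_extPhi_eq_top hp0 hmono hpos hlow μ h hh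
          (ENNReal.ofReal_ne_top : ENNReal.ofReal (K*γ^2) ≠ ⊤) hN N
        intro n hn
        calc μ (B N) ≤ μ (B n) := measure_mono (hBmono hn)
          _ ≤ μ ({x | ENNReal.ofReal (2*((n:ℝ)+1)) < g x}
                ∩ {x | m x ≤ ENNReal.ofReal (γ*((n:ℝ)+1))}) := by
              apply measure_mono
              intro x hx
              refine ⟨?_, hx.2⟩
              rw [Set.mem_setOf_eq, hx.1]
              exact ENNReal.ofReal_lt_top
          _ ≤ ENNReal.ofReal (K*γ^2) * μ {x | ENNReal.ofReal ((n:ℝ)+1) < h x} :=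
              hyp γ hγ ((n:ℝ)+1) (by positivity)
      · left
        have hmS : MeasurableSet ({x | g x = ⊤} ∩ {x | m x = ⊤}) :=
          hgS.inter (hm (measurableSet_singleton ⊤))
        have hconst : ∫⁻ x in {x | g x = ⊤} ∩ {x | m x = ⊤}, extPhi Φ (m x) ∂μ = ⊤ := by
          have heq : ∫⁻ x in {x | g x = ⊤} ∩ {x | m x = ⊤}, extPhi Φ (m x) ∂μ
              = ∫⁻ _x in {x | g x = ⊤} ∩ {x | m x = ⊤}, (⊤:ℝ≥0∞) ∂μ := by
            apply setLIntegral_congr_fun hmS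
            intro x hx
            have hmx : m x = ⊤ := hx.2
            dsimp only
            rw [extPhi, if_pos hmx]
          rw [heq, setLIntegral_const]
          exact ENNReal.top_mul h1
        exact top_le_iff.1 (hconst ▸ setLIntegral_le_lintegral _ _)
    have hRHS : ENNReal.ofReal (D+1) * (ENNReal.ofReal γ⁻¹ * ∫⁻ x, extPhi Φ (m x) ∂μ
        + ENNReal.ofReal (γ^2) * ∫⁻ x, extPhi Φ (h x) ∂μ) = ⊤ := by
      rcases key with hk | hk
      · rw [hk, ENNReal.mul_top (ENNReal.ofReal_pos.2 (by positivity)).ne', top_add,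
          ENNReal.mul_top (ENNReal.ofReal_pos.2 (by linarith)).ne']
      · rw [hk, ENNReal.mul_top (ENNReal.ofReal_pos.2 (by positivity)).ne', add_top,
          ENNReal.mul_top (ENNReal.ofReal_pos.2 (by linarith)).ne']
    rw [hRHS]
    exact le_top
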